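/- Suppose there exists γ* ∈ Γ₁ with A[γ*] ≻ 0 and (x,t) ∈ S_SDP satisfies 2t = sup_{γ∈Γ₁}[γ,q(x)]. Then R'(x,t) = {(x',t') ∈ ℝ^{n+1} : (x')ᵀA[γ]x' = 0 and ⟨A[γ]x + b[γ], x'⟩ − t' = 0 for all γ with (1,γ) ∈ G(x,t)^⊥}. -/

import Mathlib

noncomputable section
open Matrix Set

/-- Dot-product style inner product on `ℝ × (Fin m → ℝ)` (i.e. `ℝ^{1+m}`). -/
def ipr {m : ℕ} (v w : ℝ × (Fin m → ℝ)) : ℝ := v.1 * w.1 + v.2 ⬝ᵥ w.2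

/-- `A(γ₀, γ) = γ₀ A₀ + ∑ i, γ i • A i`. -/
def Amix {ι : Type*} [Fintype ι] {m : ℕ} (A0 : Matrix ι ι ℝ)
    (A : Fin m → Matrix ι ι ℝ) (g0 : ℝ) (g : Fin m → ℝ) : Matrix ι ι ℝ :=
  g0 • A0 + ∑ i, g i • A i

/-- `b(γ) = b₀ + ∑ i, γ i • b i` (the `γ₀ = 1` slice). -/
def bmix {ι : Type*} {m : ℕ} (b0 : ι → ℝ) (b : Fin m → ι → ℝ) (g : Fin m → ℝ) : ι → ℝ :=
  b0 + ∑ i, g i • b i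

/-- The cone of convex Lagrange multipliers `Γ`. -/
def Gamma {ι : Type*} [Fintype ι] {m : ℕ} (A0 : Matrix ι ι ℝ)
    (A : Fin m → Matrix ι ι ℝ) : Set (ℝ × (Fin m → ℝ)) :=
  {p | 0 ≤ p.1 ∧ (∀ i, 0 ≤ p.2 i) ∧ (Amix A0 A p.1 p.2).PosSemidef}

/-- The slice `Γ₁` of `Γ` at `γ₀ = 1`. -/
def Gamma1 {ι : Type*} [Fintype ι] {m : ℕ} (A0 : Matrix ι ι ℝ)
    (A : Fin m → Matrix ι ι ℝ) : Set (Fin m → ℝ) :=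
  {g | (∀ i, 0 ≤ g i) ∧ (Amix A0 A 1 g).PosSemidef}

/-- Polar cone with respect to `ipr`. -/
def polarCone {m : ℕ} (S : Set (ℝ × (Fin m → ℝ))) : Set (ℝ × (Fin m → ℝ)) :=
  {v | ∀ w ∈ S, ipr v w ≤ 0}

/-- The quadratic function `x ↦ xᵀ M x + 2 bᵀ x + c`. -/
def quadF {ι : Type*} [Fintype ι] (M : Matrix ι ι ℝ) (b : ι → ℝ) (c : ℝ) (x : ι → ℝ) : ℝ :=
  x ⬝ᵥ M.mulVec x + 2 * (b ⬝ᵥ x) + c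

/-- The vector `q(x) = (q₀(x), q₁(x), …, q_m(x)) ∈ ℝ^{1+m}`. -/
def qVec {ι : Type*} [Fintype ι] {m : ℕ} (A0 : Matrix ι ι ℝ) (b0 : ι → ℝ) (c0 : ℝ)
    (A : Fin m → Matrix ι ι ℝ) (b : Fin m → ι → ℝ) (c : Fin m → ℝ)
    (x : ι → ℝ) : ℝ × (Fin m → ℝ) :=
  (quadF A0 b0 c0 x, fun i => quadF (A i) (b i) (c i) x)

/-- The first unit vector `e₀ ∈ ℝ^{1+m}`. -/
def e0 {m : ℕ} : ℝ × (Fin m → ℝ) := (1, 0)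

/-- `[γ, q(x)] = q₀(x) + ∑ i, γ i * q i (x)`. -/
def brkt {ι : Type*} [Fintype ι] {m : ℕ} (A0 : Matrix ι ι ℝ) (b0 : ι → ℝ) (c0 : ℝ)
    (A : Fin m → Matrix ι ι ℝ) (b : Fin m → ι → ℝ) (c : Fin m → ℝ)
    (g : Fin m → ℝ) (x : ι → ℝ) : ℝ :=
  quadF A0 b0 c0 x + ∑ i, g i * quadF (A i) (b i) (c i) x

/-- The projected SDP relaxation `S_SDP = {(x,t) : q(x) - 2t e₀ ∈ Γ°}`. -/
def SSDP {ι : Type*} [Fintype ι] {m : ℕ} (A0 : Matrix ι ι ℝ) (b0 : ι → ℝ) (c0 : ℝ)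
    (A : Fin m → Matrix ι ι ℝ) (b : Fin m → ι → ℝ) (c : Fin m → ℝ) :
    Set ((ι → ℝ) × ℝ) :=
  {p | qVec A0 b0 c0 A b c p.1 - (2 * p.2) • e0 ∈ polarCone (Gamma A0 A)}

/-- The QCQP epigraph `S = {(x,t) : q₀(x) ≤ 2t, q i (x) ≤ 0 ∀ i}`. -/
def Sepi {ι : Type*} [Fintype ι] {m : ℕ} (A0 : Matrix ι ι ℝ) (b0 : ι → ℝ) (c0 : ℝ)
    (A : Fin m → Matrix ι ι ℝ) (b : Fin m → ι → ℝ) (c : Fin m → ℝ) :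
    Set ((ι → ℝ) × ℝ) :=
  {p | quadF A0 b0 c0 p.1 ≤ 2 * p.2 ∧ ∀ i, quadF (A i) (b i) (c i) p.1 ≤ 0}

/-- `F` is a face of the convex cone `K`. -/
def IsFaceOf {E : Type*} [Add E] (K F : Set E) : Prop :=
  F ⊆ K ∧ ∀ y ∈ K, ∀ z ∈ K, y + z ∈ F → y ∈ F ∧ z ∈ F

/-- `G` is the minimal face of `K` containing `v`. -/
def IsMinFace {E : Type*} [Add E] (K : Set E) (v : E) (G : Set E) : Prop :=
  IsFaceOf K G ∧ v ∈ G ∧ ∀ G', IsFaceOf K G' → v ∈ G' → G ⊆ G'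

/-- The set of rounding directions `R(x,t)` at a point `p` of a convex set `C`. -/
def Rset {E : Type*} [AddCommGroup E] [Module ℝ E] (C : Set E) (p : E) : Set E :=
  {d | ∃ ε : ℝ, 0 < ε ∧ ∀ s ∈ Set.Icc (-ε) ε, p + s • d ∈ C}

/-- The first-order rounding directions `R'(x,t)`, relative to a face `G` of `Γ°`. -/
def Rset' {ι : Type*} [Fintype ι] {m : ℕ} (A0 : Matrix ι ι ℝ) (b0 : ι → ℝ) (c0 : ℝ)
    (A : Fin m → Matrix ι ι ℝ) (b : Fin m → ι → ℝ) (c : Fin m → ℝ)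
    (x : ι → ℝ) (t : ℝ) (G : Set (ℝ × (Fin m → ℝ))) : Set ((ι → ℝ) × ℝ) :=
  {d | ∀ α : ℝ,
    qVec A0 b0 c0 A b c (x + α • d.1) - (2 * (t + α * d.2)) • e0 ∈ Submodule.span ℝ G}

/-- Orthogonal complement (as a set) of a subset of `ℝ^{1+m}` w.r.t. `ipr`. -/
def orthC {m : ℕ} (G : Set (ℝ × (Fin m → ℝ))) : Set (ℝ × (Fin m → ℝ)) :=
  {v | ∀ w ∈ G, ipr v w = 0}

def toE {m : ℕ} : (ℝ × (Fin m → ℝ)) ≃ₗ[ℝ] EuclideanSpace ℝ (Fin (m+1)) where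
  toFun v := (WithLp.equiv 2 _).symm (Fin.cons v.1 v.2)
  invFun w := ((WithLp.equiv 2 _) w 0, fun i => (WithLp.equiv 2 _) w i.succ)
  left_inv v := by simp
  right_inv w := by
    ext i
    exact Fin.cases rfl (fun j => rfl) i
  map_add' v w := by
    ext i
    exact Fin.cases rfl (fun j => rfl) i
  map_smul' c v := by
    ext i
    exact Fin.cases rfl (fun j => rfl) i

lemma toE_apply_zero {m : ℕ} (v : ℝ × (Fin m → ℝ)) : toE v 0 = v.1 := rfl
lemma toE_apply_succ {m : ℕ} (v : ℝ × (Fin m → ℝ)) (i : Fin m) : toE v i.succ = v.2 i := rfl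

lemma ipr_eq_inner {m : ℕ} (v w : ℝ × (Fin m → ℝ)) :
    ipr v w = inner ℝ (toE v) (toE w) := by
  have : (inner ℝ (toE v) (toE w) : ℝ) = ∑ i : Fin (m+1), (toE v) i * (toE w) i := by
    simp [PiLp.inner_apply, RCLike.inner_apply, conj_trivial]
    exact Finset.sum_congr rfl fun i _ => mul_comm _ _
  rw [this, Fin.sum_univ_succ]
  simp only [toE_apply_zero, toE_apply_succ]
  rfl

lemma mem_span_of_orth {m : ℕ} {G : Set (ℝ × (Fin m → ℝ))} {v : ℝ × (Fin m → ℝ)}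
    (h : ∀ w, (∀ y ∈ G, ipr w y = 0) → ipr w v = 0) : v ∈ Submodule.span ℝ G := by
  set T : Submodule ℝ (EuclideanSpace ℝ (Fin (m+1))) := (Submodule.span ℝ G).map (toE (m := m)).toLinearMap with hT
  have hTspan : T = Submodule.span ℝ (toE '' G) := by
    rw [hT, Submodule.map_span]
    rfl
  have hv : toE v ∈ Tᗮᗮ := by
    rw [Submodule.mem_orthogonal]
    intro u hu
    rw [Submodule.mem_orthogonal] at hu
    have hw : ∀ y ∈ G, ipr (toE.symm u) y = 0 := by
      intro y hy
      have := hu (toE y) (by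
        rw [hTspan]; exact Submodule.subset_span ⟨y, hy, rfl⟩)
      rw [ipr_eq_inner, toE.apply_symm_apply]
      rw [real_inner_comm] at this
      exact this
    have := h (toE.symm u) hw
    rwa [ipr_eq_inner, toE.apply_symm_apply] at this
  rw [Submodule.orthogonal_orthogonal] at hv
  obtain ⟨y, hy, hyv⟩ := Submodule.mem_map.mp hv
  rwa [← toE.injective hyv]

lemma ipr_comm {m : ℕ} (v w : ℝ × (Fin m → ℝ)) : ipr v w = ipr w v := by
  simp [ipr, dotProduct_comm]; ring
section helpers
variable {n m : ℕ}

lemma ipr_add_left (v w u : ℝ × (Fin m → ℝ)) : ipr (v + w) u = ipr v u + ipr w u := by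
  simp [ipr, add_dotProduct]; ring

lemma ipr_smul_left (c : ℝ) (v u : ℝ × (Fin m → ℝ)) : ipr (c • v) u = c * ipr v u := by
  simp [ipr, smul_dotProduct]; ring

lemma ipr_add_right (u v w : ℝ × (Fin m → ℝ)) : ipr u (v + w) = ipr u v + ipr u w := by
  simp [ipr, dotProduct_add]; ring

lemma ipr_smul_right (c : ℝ) (u v : ℝ × (Fin m → ℝ)) : ipr u (c • v) = c * ipr u v := by
  simp [ipr, dotProduct_smul]; ring

lemma ipr_zero_right (u : ℝ × (Fin m → ℝ)) : ipr u 0 = 0 := by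
  simp [ipr]

lemma orthC_mem_add {G : Set (ℝ × (Fin m → ℝ))} {v w : ℝ × (Fin m → ℝ)}
    (hv : v ∈ orthC G) (hw : w ∈ orthC G) : v + w ∈ orthC G := by
  intro y hy; rw [ipr_add_left, hv y hy, hw y hy, add_zero]

lemma orthC_mem_smul {G : Set (ℝ × (Fin m → ℝ))} {v : ℝ × (Fin m → ℝ)} (c : ℝ)
    (hv : v ∈ orthC G) : c • v ∈ orthC G := by
  intro y hy; rw [ipr_smul_left, hv y hy, mul_zero]

lemma ipr_span_zero {G : Set (ℝ × (Fin m → ℝ))} {w : ℝ × (Fin m → ℝ)} (hw : w ∈ orthC G)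
    {v : ℝ × (Fin m → ℝ)} (hv : v ∈ Submodule.span ℝ G) : ipr w v = 0 := by
  induction hv using Submodule.span_induction with
  | mem y hy => exact hw y hy
  | zero => exact ipr_zero_right w
  | add a b _ _ ha hb => rw [ipr_add_right, ha, hb, add_zero]
  | smul c a _ ha => rw [ipr_smul_right, ha, mul_zero]

lemma dot_sum_smul (u : Fin n → ℝ) (g : Fin m → ℝ) (w : Fin m → Fin n → ℝ) :
    u ⬝ᵥ (∑ i, g i • w i) = ∑ i, g i * (u ⬝ᵥ w i) := by
  simp only [dotProduct, Finset.sum_apply, Pi.smul_apply, smul_eq_mul, Finset.mul_sum]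
  rw [Finset.sum_comm]
  exact Finset.sum_congr rfl fun i _ => Finset.sum_congr rfl fun k _ => by ring

lemma sum_smul_dot (u : Fin n → ℝ) (g : Fin m → ℝ) (w : Fin m → Fin n → ℝ) :
    (∑ i, g i • w i) ⬝ᵥ u = ∑ i, g i * (w i ⬝ᵥ u) := by
  rw [dotProduct_comm, dot_sum_smul]
  exact Finset.sum_congr rfl fun i _ => by rw [dotProduct_comm]

lemma amix_mulVec (A0 : Matrix (Fin n) (Fin n) ℝ) (A : Fin m → Matrix (Fin n) (Fin n) ℝ)
    (g0 : ℝ) (g : Fin m → ℝ) (v : Fin n → ℝ) :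
    (Amix A0 A g0 g) *ᵥ v = g0 • (A0 *ᵥ v) + ∑ i, g i • (A i *ᵥ v) := by
  unfold Amix
  rw [Matrix.add_mulVec, Matrix.smul_mulVec]
  congr 1
  have h1 : (∑ i, g i • A i) *ᵥ v = ∑ i, (g i • A i) *ᵥ v := by
    ext j
    simp only [Matrix.mulVec, dotProduct, Matrix.sum_apply, Finset.sum_apply, Finset.sum_mul]
    exact Finset.sum_comm
  rw [h1]
  exact Finset.sum_congr rfl fun i _ => Matrix.smul_mulVec _ _ _

lemma dot_amix (A0 : Matrix (Fin n) (Fin n) ℝ) (A : Fin m → Matrix (Fin n) (Fin n) ℝ)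
    (g0 : ℝ) (g : Fin m → ℝ) (u v : Fin n → ℝ) :
    u ⬝ᵥ (Amix A0 A g0 g) *ᵥ v
      = g0 * (u ⬝ᵥ A0 *ᵥ v) + ∑ i, g i * (u ⬝ᵥ (A i) *ᵥ v) := by
  rw [amix_mulVec, dotProduct_add, dotProduct_smul, dot_sum_smul, smul_eq_mul]

lemma amix_dot (A0 : Matrix (Fin n) (Fin n) ℝ) (A : Fin m → Matrix (Fin n) (Fin n) ℝ)
    (g0 : ℝ) (g : Fin m → ℝ) (u v : Fin n → ℝ) :
    ((Amix A0 A g0 g) *ᵥ v) ⬝ᵥ u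
      = g0 * ((A0 *ᵥ v) ⬝ᵥ u) + ∑ i, g i * (((A i) *ᵥ v) ⬝ᵥ u) := by
  rw [amix_mulVec, add_dotProduct, smul_dotProduct, sum_smul_dot, smul_eq_mul]

lemma bmix_dot (b0 : Fin n → ℝ) (b : Fin m → Fin n → ℝ) (g : Fin m → ℝ) (v : Fin n → ℝ) :
    (bmix b0 b g) ⬝ᵥ v = b0 ⬝ᵥ v + ∑ i, g i * (b i ⬝ᵥ v) := by
  unfold bmix
  rw [add_dotProduct, sum_smul_dot]

lemma quadF_expand {M : Matrix (Fin n) (Fin n) ℝ} (hM : M.IsSymm) (bb : Fin n → ℝ) (cc : ℝ)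
    (x d : Fin n → ℝ) (α : ℝ) :
    quadF M bb cc (x + α • d)
      = quadF M bb cc x + α * (2 * ((M *ᵥ x + bb) ⬝ᵥ d)) + α ^ 2 * (d ⬝ᵥ M *ᵥ d) := by
  unfold quadF
  have h2 : x ⬝ᵥ M *ᵥ d = (M *ᵥ x) ⬝ᵥ d := by
    rw [dotProduct_mulVec, ← Matrix.mulVec_transpose, hM.eq, dotProduct_comm]
  have h3 : d ⬝ᵥ (M *ᵥ x) = (M *ᵥ x) ⬝ᵥ d := dotProduct_comm _ _
  simp only [Matrix.mulVec_add, Matrix.mulVec_smul, add_dotProduct, dotProduct_add,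
    dotProduct_smul, smul_dotProduct, smul_eq_mul, h2, h3]
  ring

end helpers

section helpers2
variable {n m : ℕ}

lemma ipr_sub_right (u v w : ℝ × (Fin m → ℝ)) : ipr u (v - w) = ipr u v - ipr u w := by
  simp [ipr, dotProduct_sub]; ring

lemma ipr_zero_left (u : ℝ × (Fin m → ℝ)) : ipr 0 u = 0 := by simp [ipr]

lemma polar_add {S : Set (ℝ × (Fin m → ℝ))} {v w : ℝ × (Fin m → ℝ)}
    (hv : v ∈ polarCone S) (hw : w ∈ polarCone S) : v + w ∈ polarCone S := by
  intro γ hγ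
  rw [ipr_add_left]
  linarith [hv γ hγ, hw γ hγ]

lemma polar_zero {S : Set (ℝ × (Fin m → ℝ))} : (0 : ℝ × (Fin m → ℝ)) ∈ polarCone S := by
  intro γ hγ; rw [ipr_zero_left]

/-- minimal face is contained in the explicit face -/
lemma minFace_sub {K G : Set (ℝ × (Fin m → ℝ))} {v : ℝ × (Fin m → ℝ)}
    (hK : ∀ y ∈ K, ∀ z ∈ K, y + z ∈ K) (h0 : (0:ℝ × (Fin m → ℝ)) ∈ K) (hv : v ∈ K)
    (hG : IsMinFace K v G) : G ⊆ {y | y ∈ K ∧ v - y ∈ K} := by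
  apply hG.2.2
  · constructor
    · exact fun y hy => hy.1
    · intro y hy z hz hyz
      have h1 : v - y = (v - (y + z)) + z := by abel
      have h2 : v - z = (v - (y + z)) + y := by abel
      exact ⟨⟨hy, by rw [h1]; exact hK _ hyz.2 _ hz⟩, ⟨hz, by rw [h2]; exact hK _ hyz.2 _ hy⟩⟩
  · exact ⟨hv, by simpa using h0⟩

lemma orth_extend {G : Set (ℝ × (Fin m → ℝ))}
    (Hu : ∃ u ∈ orthC G, u.1 ≠ 0) (Z : ℝ × (Fin m → ℝ))
    (hZ : ∀ g : Fin m → ℝ, ((1:ℝ), g) ∈ orthC G → ipr (1, g) Z = 0) :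
    ∀ w ∈ orthC G, ipr w Z = 0 := by
  obtain ⟨u, hu, hu1⟩ := Hu
  have key : ∀ w ∈ orthC G, w.1 ≠ 0 → ipr w Z = 0 := by
    intro w hw hw1
    have hsw : ((w.1)⁻¹ • w) = ((1:ℝ), (w.1)⁻¹ • w.2) := by
      have : ((w.1)⁻¹ • w).1 = 1 := by
        simp [Prod.smul_def, inv_mul_cancel₀ hw1]
      exact Prod.ext this rfl
    have hmem : ((1:ℝ), (w.1)⁻¹ • w.2) ∈ orthC G := by
      rw [← hsw]; exact orthC_mem_smul _ hw
    have h1 : ipr ((w.1)⁻¹ • w) Z = 0 := by rw [hsw]; exact hZ _ hmem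
    have h2 := ipr_smul_left (w.1)⁻¹ w Z
    rw [h1] at h2
    have := h2.symm
    rcases mul_eq_zero.mp this with h | h
    · exact absurd h (inv_ne_zero hw1)
    · exact h
  intro w hw
  by_cases hw1 : w.1 = 0
  · have hwu : w + u ∈ orthC G := orthC_mem_add hw hu
    have hwu1 : (w + u).1 ≠ 0 := by simpa [hw1] using hu1
    have e1 := key _ hwu hwu1
    have e2 := key _ hu hu1
    rw [ipr_add_left] at e1
    linarith
  · exact key w hw hw1

end helpers2

section helpers3
variable {n m : ℕ} (A0 : Matrix (Fin n) (Fin n) ℝ) (b0 : Fin n → ℝ) (c0 : ℝ)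
  (A : Fin m → Matrix (Fin n) (Fin n) ℝ) (b : Fin m → Fin n → ℝ) (c : Fin m → ℝ)

lemma ipr_one_qvec (g : Fin m → ℝ) (x : Fin n → ℝ) (t : ℝ) :
    ipr (1, g) (qVec A0 b0 c0 A b c x - (2*t) • e0) = brkt A0 b0 c0 A b c g x - 2*t := by
  simp only [ipr, qVec, e0, brkt, dotProduct, Prod.fst_sub, Prod.snd_sub, Prod.smul_mk,
    smul_eq_mul, Pi.sub_apply, Pi.smul_apply, Pi.zero_apply, mul_zero, sub_zero, one_mul]
  ring

lemma one_mem_Gamma {g : Fin m → ℝ} (hg : g ∈ Gamma1 A0 A) : ((1:ℝ), g) ∈ Gamma A0 A :=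
  ⟨zero_le_one, hg.1, hg.2⟩

/-- Key lemma: there is an element of `orthC G` with nonzero first coordinate. -/
lemma exists_orth_ne {x : Fin n → ℝ} {t : ℝ} {G : Set (ℝ × (Fin m → ℝ))}
    (hxt : (x, t) ∈ SSDP A0 b0 c0 A b c)
    (hsup : IsLUB ((fun g => brkt A0 b0 c0 A b c g x) '' Gamma1 A0 A) (2 * t))
    (hG : IsMinFace (polarCone (Gamma A0 A)) (qVec A0 b0 c0 A b c x - (2 * t) • e0) G) :
    ∃ u ∈ orthC G, u.1 ≠ 0 := by
  set K := polarCone (Gamma A0 A) with hK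
  set vstar := qVec A0 b0 c0 A b c x - (2 * t) • e0 with hvstar
  have hvK : vstar ∈ K := hxt
  have hGsub : G ⊆ {y | y ∈ K ∧ vstar - y ∈ K} :=
    minFace_sub (fun y hy z hz => polar_add hy hz) polar_zero hvK hG
  have hub : ∀ g ∈ Gamma1 A0 A, brkt A0 b0 c0 A b c g x ≤ 2*t := by
    intro g hg
    exact hsup.1 ⟨g, hg, rfl⟩
  by_contra hcon
  push_neg at hcon
  -- e0 ∈ span G
  have he0 : (e0 : ℝ × (Fin m → ℝ)) ∈ Submodule.span ℝ G := by
    apply mem_span_of_orth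
    intro w hw
    have h1 : w.1 = 0 := hcon w hw
    simp [ipr, e0, h1]
  -- bound property on span G
  have hbound : ∀ v ∈ Submodule.span ℝ G, ∃ C : ℝ, 0 ≤ C ∧
      ∀ g ∈ Gamma1 A0 A, |ipr (1, g) v| ≤ C * (2*t - brkt A0 b0 c0 A b c g x) := by
    intro v hv
    induction hv using Submodule.span_induction with
    | mem y hy =>
      refine ⟨1, zero_le_one, fun g hg => ?_⟩
      obtain ⟨hyK, hyK2⟩ := hGsub hy
      have hγ : ((1:ℝ), g) ∈ Gamma A0 A := one_mem_Gamma A0 A hg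
      have h1 : ipr (1, g) y ≤ 0 := by rw [ipr_comm]; exact hyK _ hγ
      have h2 : ipr (1, g) (vstar - y) ≤ 0 := by rw [ipr_comm]; exact hyK2 _ hγ
      rw [ipr_sub_right] at h2
      have h3 : ipr (1, g) vstar = brkt A0 b0 c0 A b c g x - 2*t := ipr_one_qvec A0 b0 c0 A b c g x t
      rw [h3] at h2
      rw [one_mul, abs_le]
      constructor <;> linarith
    | zero =>
      exact ⟨0, le_refl _, fun g hg => by simp [ipr_zero_right]⟩
    | add a b' _ _ ha hb =>
      obtain ⟨Ca, hCa0, hCa⟩ := ha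
      obtain ⟨Cb, hCb0, hCb⟩ := hb
      refine ⟨Ca + Cb, by linarith, fun g hg => ?_⟩
      rw [ipr_add_right]
      calc |ipr (1,g) a + ipr (1,g) b'| ≤ |ipr (1,g) a| + |ipr (1,g) b'| := abs_add_le _ _
        _ ≤ Ca * (2*t - brkt A0 b0 c0 A b c g x) + Cb * (2*t - brkt A0 b0 c0 A b c g x) := by
            exact add_le_add (hCa g hg) (hCb g hg)
        _ = (Ca + Cb) * (2*t - brkt A0 b0 c0 A b c g x) := by ring
    | smul r a _ ha =>
      obtain ⟨Ca, hCa0, hCa⟩ := ha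
      refine ⟨|r| * Ca, by positivity, fun g hg => ?_⟩
      rw [ipr_smul_right, abs_mul, mul_assoc]
      exact mul_le_mul_of_nonneg_left (hCa g hg) (abs_nonneg r)
  obtain ⟨C, hC0, hC⟩ := hbound e0 he0
  -- ipr (1,g) e0 = 1
  have hone : ∀ g : Fin m → ℝ, ipr (1, g) e0 = 1 := by
    intro g; simp [ipr, e0]
  -- find g with 2t - brkt < (C+1)⁻¹
  have hCpos : (0:ℝ) < C + 1 := by linarith
  have hex : ∃ g ∈ Gamma1 A0 A, 2*t - (C+1)⁻¹ < brkt A0 b0 c0 A b c g x := by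
    by_contra hcon2
    push_neg at hcon2
    have : 2*t ≤ 2*t - (C+1)⁻¹ := by
      apply hsup.2
      rintro s ⟨g, hg, rfl⟩
      exact hcon2 g hg
    have : (0:ℝ) < (C+1)⁻¹ := by positivity
    linarith
  obtain ⟨g, hg, hgx⟩ := hex
  have h1 := hC g hg
  rw [hone g, abs_one] at h1
  have hδ : 0 ≤ 2*t - brkt A0 b0 c0 A b c g x := by linarith [hub g hg]
  have hδ2 : (2*t - brkt A0 b0 c0 A b c g x) * (C+1) < 1 := by
    have : 2*t - brkt A0 b0 c0 A b c g x < (C+1)⁻¹ := by linarith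
    calc (2*t - brkt A0 b0 c0 A b c g x) * (C+1) < (C+1)⁻¹ * (C+1) := by
          exact mul_lt_mul_of_pos_right this hCpos
      _ = 1 := inv_mul_cancel₀ (ne_of_gt hCpos)
  nlinarith
end helpers3

/-- explicit description of `R'(x,t)` at epigraph-tight points. -/
theorem stmt13 {n m : ℕ} (A0 : Matrix (Fin n) (Fin n) ℝ) (b0 : Fin n → ℝ) (c0 : ℝ)
    (A : Fin m → Matrix (Fin n) (Fin n) ℝ) (b : Fin m → Fin n → ℝ) (c : Fin m → ℝ)
    (hA0 : A0.IsSymm) (hA : ∀ i, (A i).IsSymm)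
    (hdef : ∃ g ∈ Gamma1 A0 A, (Amix A0 A 1 g).PosDef)
    (x : Fin n → ℝ) (t : ℝ) (hxt : (x, t) ∈ SSDP A0 b0 c0 A b c)
    (hsup : IsLUB ((fun g => brkt A0 b0 c0 A b c g x) '' Gamma1 A0 A) (2 * t))
    (G : Set (ℝ × (Fin m → ℝ)))
    (hG : IsMinFace (polarCone (Gamma A0 A))
      (qVec A0 b0 c0 A b c x - (2 * t) • e0) G) :
    Rset' A0 b0 c0 A b c x t G =
      {d : (Fin n → ℝ) × ℝ | ∀ g : Fin m → ℝ, ((1 : ℝ), g) ∈ orthC G →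
        d.1 ⬝ᵥ (Amix A0 A 1 g).mulVec d.1 = 0 ∧
        ((Amix A0 A 1 g).mulVec x + bmix b0 b g) ⬝ᵥ d.1 - d.2 = 0} := by
  have Hu : ∃ u ∈ orthC G, u.1 ≠ 0 := exists_orth_ne A0 b0 c0 A b c hxt hsup hG
  ext d
  simp only [Rset', Set.mem_setOf_eq]
  set L : ℝ × (Fin m → ℝ) :=
    (2*((A0 *ᵥ x + b0) ⬝ᵥ d.1) - 2*d.2, fun i => 2*(((A i) *ᵥ x + b i) ⬝ᵥ d.1)) with hL
  set Q : ℝ × (Fin m → ℝ) :=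
    (d.1 ⬝ᵥ A0 *ᵥ d.1, fun i => d.1 ⬝ᵥ (A i) *ᵥ d.1) with hQ
  have hdecomp : ∀ α : ℝ, qVec A0 b0 c0 A b c (x + α • d.1) - (2*(t + α*d.2)) • e0
      = (qVec A0 b0 c0 A b c x - (2*t) • e0) + α • L + α^2 • Q := by
    intro α
    apply Prod.ext
    · simp only [qVec, e0, hL, hQ, Prod.fst_sub, Prod.fst_add, Prod.smul_fst, Prod.smul_mk,
        smul_eq_mul, mul_one]
      rw [quadF_expand hA0]
      ring
    · funext i
      simp only [qVec, e0, hL, hQ, Prod.snd_sub, Prod.snd_add, Prod.smul_snd, Prod.smul_mk,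
        Pi.sub_apply, Pi.add_apply, Pi.smul_apply, Pi.zero_apply, smul_eq_mul, mul_zero, sub_zero]
      rw [quadF_expand (hA i)]
      try ring
  have hiprL1 : ∀ g : Fin m → ℝ,
      ipr (1, g) L = 2 * (((Amix A0 A 1 g) *ᵥ x + bmix b0 b g) ⬝ᵥ d.1 - d.2) := by
    intro g
    rw [add_dotProduct, amix_dot, bmix_dot]
    have hsplit : ∑ i, g i * (2*(((A i) *ᵥ x + b i) ⬝ᵥ d.1))
        = 2*(∑ i, g i * (((A i) *ᵥ x) ⬝ᵥ d.1)) + 2*(∑ i, g i * ((b i) ⬝ᵥ d.1)) := by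
      calc ∑ i, g i * (2*(((A i) *ᵥ x + b i) ⬝ᵥ d.1))
          = ∑ i, (2*(g i * (((A i) *ᵥ x) ⬝ᵥ d.1)) + 2*(g i * ((b i) ⬝ᵥ d.1))) :=
            Finset.sum_congr rfl fun i _ => by rw [add_dotProduct]; ring
        _ = _ := by rw [Finset.sum_add_distrib, ← Finset.mul_sum, ← Finset.mul_sum]
    have hunf : ipr (1, g) L = L.1 + ∑ i, g i * L.2 i := by
      simp [ipr, dotProduct]
    rw [hunf, hL]
    simp only
    rw [hsplit, add_dotProduct]
    ring
  have hiprQ1 : ∀ g : Fin m → ℝ, ipr (1, g) Q = d.1 ⬝ᵥ (Amix A0 A 1 g) *ᵥ d.1 := by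
    intro g
    rw [dot_amix]
    have hunf : ipr (1, g) Q = Q.1 + ∑ i, g i * Q.2 i := by
      simp [ipr, dotProduct]
    rw [hunf, hQ]
    simp only
    ring
  constructor
  · intro hd g hg
    have hα : ∀ α : ℝ, ipr (1,g) (qVec A0 b0 c0 A b c x - (2*t) • e0)
        + α * ipr (1,g) L + α^2 * ipr (1,g) Q = 0 := by
      intro α
      have h0 := ipr_span_zero hg (hd α)
      rw [hdecomp α, ipr_add_right, ipr_add_right, ipr_smul_right, ipr_smul_right] at h0
      linarith
    have ea := hα 0
    have eb := hα 1
    have ec := hα (-1)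
    norm_num at ea eb ec
    have hQ0 : ipr (1,g) Q = 0 := by linarith
    have hL0 : ipr (1,g) L = 0 := by linarith
    constructor
    · rw [← hiprQ1 g]; exact hQ0
    · have h2 := hiprL1 g
      rw [hL0] at h2
      have := h2.symm
      rw [mul_eq_zero] at this
      rcases this with h | h
      · norm_num at h
      · exact h
  · intro hd α
    rw [hdecomp α]
    have hvmem : (qVec A0 b0 c0 A b c x - (2*t) • e0) ∈ Submodule.span ℝ G :=
      Submodule.subset_span hG.2.1
    have hLmem : L ∈ Submodule.span ℝ G := by
      apply mem_span_of_orth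
      intro w hw
      refine orth_extend Hu L ?_ w hw
      intro g hg
      rw [hiprL1 g, (hd g hg).2, mul_zero]
    have hQmem : Q ∈ Submodule.span ℝ G := by
      apply mem_span_of_orth
      intro w hw
      refine orth_extend Hu Q ?_ w hw
      intro g hg
      rw [hiprQ1 g]
      exact (hd g hg).1
    exact Submodule.add_mem _ (Submodule.add_mem _ hvmem (Submodule.smul_mem _ _ hLmem))
      (Submodule.smul_mem _ _ hQmem)
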